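/- Let u(t,x) = ∫_ℝ φ(y) p(t,x,y) dy where p is the 1-dimensional skew Brownian motion density with σ > 0, q ∈ [-1,1], and φ : ℝ → ℝ bounded continuous. Then for every x ∈ ℝ, lim_{t↓0} u(t,x) = φ(x). -/

import Mathlib

open Real MeasureTheory Filter Set Topology

noncomputable def sgn (y : ℝ) : ℝ := if 0 < y then 1 else if y < 0 then -1 else 0

/-- Transition density of one-dimensional skew Brownian motion. -/
noncomputable def skewDensity (σ q t x y : ℝ) : ℝ :=
  (Real.sqrt (2 * Real.pi * t * σ ^ 2))⁻¹ *
    (Real.exp (-(y - x) ^ 2 / (2 * t * σ ^ 2)) +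
      q * sgn y * Real.exp (-(|y| + |x|) ^ 2 / (2 * t * σ ^ 2)))

lemma abs_sgn_le (y : ℝ) : |sgn y| ≤ 1 := by
  unfold sgn; split_ifs <;> norm_num

lemma measurable_sgn : Measurable sgn := by
  unfold sgn
  refine Measurable.ite measurableSet_Ioi measurable_const ?_
  exact Measurable.ite measurableSet_Iio measurable_const measurable_const

lemma sgn_mul_of_pos {c : ℝ} (hc : 0 < c) (z : ℝ) : sgn (c * z) = sgn z := by
  have hpos : 0 < c * z ↔ 0 < z := ⟨fun h => by nlinarith, fun h => mul_pos hc h⟩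
  have hneg : c * z < 0 ↔ z < 0 := ⟨fun h => by nlinarith, fun h => mul_neg_of_pos_of_neg hc h⟩
  simp only [sgn, hpos, hneg]

lemma exp_sq_integrable {b : ℝ} (hb : 0 < b) : Integrable (fun z : ℝ => Real.exp (-z^2 / b)) := by
  simpa only [show ∀ z:ℝ, -b⁻¹*z^2 = -z^2/b from fun z => by ring]
    using integrable_exp_neg_mul_sq (inv_pos.2 hb)

-- square root algebra
lemma sqrt_split {σ t : ℝ} (hσ : 0 < σ) (ht : 0 < t) :
    Real.sqrt (2 * π * t * σ ^ 2) = Real.sqrt (2*π) * (Real.sqrt t * σ) := by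
  rw [show 2 * π * t * σ^2 = (2*π) * (t * σ^2) by ring,
    Real.sqrt_mul (by positivity), Real.sqrt_mul ht.le, Real.sqrt_sq hσ.le]


lemma key_cov (σ : ℝ) (hσ : 0 < σ) (q : ℝ) (hq : |q| ≤ 1) (φ : ℝ → ℝ) (hφc : Continuous φ)
    {M : ℝ} (hM : ∀ y, |φ y| ≤ M) (x t : ℝ) (ht : 0 < t) :
    ∫ y : ℝ, φ y * skewDensity σ q t x y
      = (∫ z : ℝ, φ (x + Real.sqrt t * σ * z) * ((Real.sqrt (2*π))⁻¹ * Real.exp (-z^2/2)))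
        + ∫ z : ℝ, φ (Real.sqrt t * σ * z) *
            (q * sgn z * ((Real.sqrt (2*π))⁻¹ * Real.exp (-(|z| + |x| / (Real.sqrt t * σ))^2/2))) := by
  set c : ℝ := Real.sqrt t * σ with hc_def
  have hc : 0 < c := by positivity
  have hM0 : 0 ≤ M := (abs_nonneg _).trans (hM 0)
  set A : ℝ := (Real.sqrt (2 * π * t * σ ^ 2))⁻¹ with hA_def
  have hA : 0 < A := by rw [hA_def]; positivity
  have hcA : c * A = (Real.sqrt (2*π))⁻¹ := by
    rw [hA_def, sqrt_split hσ ht, ← hc_def, mul_inv]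
    field_simp
  have hc2 : c ^ 2 = t * σ ^ 2 := by
    rw [hc_def, mul_pow, Real.sq_sqrt ht.le]
  have hb : (0:ℝ) < 2 * t * σ ^ 2 := by positivity
  -- the two pieces
  set main : ℝ → ℝ := fun y => φ y * (A * Real.exp (-(y - x) ^ 2 / (2 * t * σ ^ 2))) with hmain_def
  set corr : ℝ → ℝ := fun y =>
    φ y * (A * (q * sgn y * Real.exp (-(|y| + |x|) ^ 2 / (2 * t * σ ^ 2)))) with hcorr_def
  have hsplit : ∀ y, φ y * skewDensity σ q t x y = main y + corr y := by
    intro y; simp only [hmain_def, hcorr_def, skewDensity, ← hA_def]; ring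
  have hint_main : Integrable main := by
    have h1 : Integrable (fun y : ℝ => (M * A) * Real.exp (-(y - x)^2 / (2*t*σ^2))) :=
      (((exp_sq_integrable hb).comp_sub_right x).const_mul _)
    refine h1.mono' ?_ ?_
    · have hcont : Continuous fun y : ℝ => Real.exp (-(y - x)^2 / (2*t*σ^2)) :=
        Real.continuous_exp.comp ((((continuous_id.sub continuous_const).pow 2).neg).div_const _)
      exact ((hφc.mul (continuous_const.mul hcont)).aestronglyMeasurable)
    · refine Filter.Eventually.of_forall fun y => ?_
      have := hM y
      simp only [hmain_def, norm_mul, Real.norm_eq_abs]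
      rw [abs_of_pos hA, abs_of_pos (Real.exp_pos _)]
      calc |φ y| * (A * Real.exp (-(y - x)^2 / (2*t*σ^2)))
          ≤ M * (A * Real.exp (-(y - x)^2 / (2*t*σ^2))) := by
            apply mul_le_mul_of_nonneg_right this (by positivity)
        _ = (M * A) * Real.exp (-(y - x)^2 / (2*t*σ^2)) := by ring
  have hint_corr : Integrable corr := by
    have h1 : Integrable (fun y : ℝ => (M * A) * Real.exp (-y^2 / (2*t*σ^2))) :=
      ((exp_sq_integrable hb).const_mul _)
    refine h1.mono' ?_ ?_
    · have hcont : Continuous fun y : ℝ => Real.exp (-(|y| + |x|)^2 / (2*t*σ^2)) :=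
        Real.continuous_exp.comp ((((continuous_abs.add continuous_const).pow 2).neg).div_const _)
      refine AEStronglyMeasurable.mul hφc.aestronglyMeasurable ?_
      exact (Measurable.aestronglyMeasurable
        (measurable_const.mul ((measurable_const.mul measurable_sgn).mul hcont.measurable)))
    · refine Filter.Eventually.of_forall fun y => ?_
      simp only [hcorr_def, norm_mul, Real.norm_eq_abs]
      have hexp : Real.exp (-(|y| + |x|)^2 / (2*t*σ^2)) ≤ Real.exp (-y^2 / (2*t*σ^2)) := by
        apply Real.exp_le_exp.2
        have hnum : -(|y| + |x|)^2 ≤ -y^2 := by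
          nlinarith [abs_nonneg y, abs_nonneg x, sq_abs y]
        exact div_le_div_of_nonneg_right hnum hb.le
      rw [abs_of_pos hA, abs_of_pos (Real.exp_pos _)]
      calc |φ y| * (A * (|q| * |sgn y| * Real.exp (-(|y| + |x|)^2 / (2*t*σ^2))))
          ≤ M * (A * (1 * 1 * Real.exp (-y^2 / (2*t*σ^2)))) := by
            refine mul_le_mul (hM y) ?_ (by positivity) hM0
            refine mul_le_mul_of_nonneg_left ?_ hA.le
            exact mul_le_mul (mul_le_mul hq (abs_sgn_le y) (abs_nonneg _) (by norm_num))
              hexp (Real.exp_pos _).le (by norm_num)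
        _ = (M * A) * Real.exp (-y^2 / (2*t*σ^2)) := by ring
  have hmain_cov : ∫ y, main y = ∫ z : ℝ, φ (x + c * z) * ((Real.sqrt (2*π))⁻¹ * Real.exp (-z^2/2)) := by
    have hpt : ∀ z : ℝ, φ (x + c * z) * ((Real.sqrt (2*π))⁻¹ * Real.exp (-z^2/2))
        = c • ((fun w => main (x + w)) (c * z)) := by
      intro z
      simp only [hmain_def, smul_eq_mul]
      rw [show x + c * z - x = c * z by ring, show (c*z)^2 = c^2 * z^2 by ring, hc2,
        show -(t * σ^2 * z^2) / (2*t*σ^2) = -z^2/2 by field_simp, ← hcA]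
      ring
    rw [funext hpt, integral_smul, Measure.integral_comp_mul_left (fun w => main (x + w)) c,
      integral_add_left_eq_self, abs_of_pos (inv_pos.2 hc), smul_smul,
      mul_inv_cancel₀ hc.ne', one_smul]
  have hcorr_cov : ∫ y, corr y = ∫ z : ℝ, φ (c * z) *
      (q * sgn z * ((Real.sqrt (2*π))⁻¹ * Real.exp (-(|z| + |x| / c)^2/2))) := by
    have hpt : ∀ z : ℝ, φ (c * z) *
        (q * sgn z * ((Real.sqrt (2*π))⁻¹ * Real.exp (-(|z| + |x| / c)^2/2)))
        = c • corr (c * z) := by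
      intro z
      simp only [hcorr_def, smul_eq_mul]
      rw [sgn_mul_of_pos hc, abs_mul, abs_of_pos hc,
        show (c * |z| + |x|) = c * (|z| + |x| / c) by field_simp,
        show (c * (|z| + |x|/c))^2 = c^2 * (|z| + |x|/c)^2 by ring, hc2,
        show -(t * σ^2 * (|z| + |x|/c)^2) / (2*t*σ^2) = -(|z| + |x|/c)^2/2 by field_simp,
        ← hcA]
      ring
    rw [funext hpt, integral_smul, Measure.integral_comp_mul_left corr c,
      abs_of_pos (inv_pos.2 hc), smul_smul, mul_inv_cancel₀ hc.ne', one_smul]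
  calc ∫ y : ℝ, φ y * skewDensity σ q t x y = ∫ y, (main y + corr y) := by
        simp only [hsplit]
    _ = (∫ y, main y) + ∫ y, corr y := integral_add hint_main hint_corr
    _ = _ := by rw [hmain_cov, hcorr_cov]

lemma sgn_neg' (z : ℝ) : sgn (-z) = - sgn z := by
  unfold sgn
  rcases lt_trichotomy z 0 with h|h|h
  · simp [h, neg_pos.2 h, asymm h, not_lt.2 (neg_pos.2 h).le]
  · simp [h]
  · simp [h, asymm h, neg_neg, not_lt.2 h.le, neg_lt_zero.2 h, not_lt.2 (neg_lt_zero.2 h).le]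

lemma gauss_int : ∫ z : ℝ, Real.exp (-z^2/2) = Real.sqrt (2*π) := by
  have h := integral_gaussian (1/2 : ℝ)
  rw [show (π / (1/2:ℝ)) = 2*π by ring] at h
  simpa only [show ∀ z:ℝ, -(1/2:ℝ)*z^2 = -z^2/2 from fun z => by ring] using h

lemma F2_bound {q M : ℝ} (hq : |q| ≤ 1) (z a : ℝ) (ha : 0 ≤ a) {φv : ℝ} (hφ : |φv| ≤ M) :
    |φv * (q * sgn z * ((Real.sqrt (2*π))⁻¹ * Real.exp (-(|z| + a)^2/2)))|
      ≤ M * ((Real.sqrt (2*π))⁻¹ * Real.exp (-z^2/2)) := by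
  have hC : (0:ℝ) < (Real.sqrt (2*π))⁻¹ := by positivity
  have he : Real.exp (-(|z| + a)^2/2) ≤ Real.exp (-z^2/2) := by
    apply Real.exp_le_exp.2
    apply div_le_div_of_nonneg_right ?_ (by norm_num : (0:ℝ) ≤ 2)
    nlinarith [abs_nonneg z, sq_abs z]
  rw [abs_mul]
  refine mul_le_mul hφ ?_ (abs_nonneg _) ((abs_nonneg _).trans hφ)
  rw [abs_mul, abs_mul, abs_mul, abs_of_pos hC, abs_of_pos (Real.exp_pos _)]
  calc |q| * |sgn z| * ((Real.sqrt (2*π))⁻¹ * Real.exp (-(|z| + a)^2/2))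
      ≤ 1 * 1 * ((Real.sqrt (2*π))⁻¹ * Real.exp (-z^2/2)) := by
        refine mul_le_mul (mul_le_mul hq (abs_sgn_le z) (abs_nonneg _) (by norm_num)) ?_
          (by positivity) (by norm_num)
        exact mul_le_mul_of_nonneg_left he hC.le
    _ = (Real.sqrt (2*π))⁻¹ * Real.exp (-z^2/2) := by ring
  
lemma F2_bound' {q M : ℝ} (hq : |q| ≤ 1) (z a : ℝ) (ha : 0 ≤ a) {φv : ℝ} (hφ : |φv| ≤ M) :
    |φv * (q * sgn z * ((Real.sqrt (2*π))⁻¹ * Real.exp (-(|z| + a)^2/2)))|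
      ≤ M * ((Real.sqrt (2*π))⁻¹ * Real.exp (-a^2/2)) := by
  have hC : (0:ℝ) < (Real.sqrt (2*π))⁻¹ := by positivity
  have he : Real.exp (-(|z| + a)^2/2) ≤ Real.exp (-a^2/2) := by
    apply Real.exp_le_exp.2
    apply div_le_div_of_nonneg_right ?_ (by norm_num : (0:ℝ) ≤ 2)
    nlinarith [abs_nonneg z, sq_abs z]
  rw [abs_mul]
  refine mul_le_mul hφ ?_ (abs_nonneg _) ((abs_nonneg _).trans hφ)
  rw [abs_mul, abs_mul, abs_mul, abs_of_pos hC, abs_of_pos (Real.exp_pos _)]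
  calc |q| * |sgn z| * ((Real.sqrt (2*π))⁻¹ * Real.exp (-(|z| + a)^2/2))
      ≤ 1 * 1 * ((Real.sqrt (2*π))⁻¹ * Real.exp (-a^2/2)) := by
        refine mul_le_mul (mul_le_mul hq (abs_sgn_le z) (abs_nonneg _) (by norm_num)) ?_
          (by positivity) (by norm_num)
        exact mul_le_mul_of_nonneg_left he hC.le
    _ = (Real.sqrt (2*π))⁻¹ * Real.exp (-a^2/2) := by ring

theorem initial_condition (σ q : ℝ) (hσ : 0 < σ) (hq : q ∈ Set.Icc (-1 : ℝ) 1)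
    (φ : ℝ → ℝ) (hφc : Continuous φ) (hφb : ∃ M : ℝ, ∀ y, |φ y| ≤ M) (x : ℝ) :
    Tendsto (fun t : ℝ => ∫ y : ℝ, φ y * skewDensity σ q t x y)
      (nhdsWithin 0 (Set.Ioi 0)) (nhds (φ x)) := by
  obtain ⟨M, hM⟩ := hφb
  have hM0 : 0 ≤ M := (abs_nonneg _).trans (hM 0)
  have hq' : |q| ≤ 1 := abs_le.2 ⟨hq.1, hq.2⟩
  have hC : (0:ℝ) < (Real.sqrt (2*π))⁻¹ := by positivity
  set l : Filter ℝ := nhdsWithin 0 (Set.Ioi 0) with hl_def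
  -- the two families after change of variables
  set F₁ : ℝ → ℝ → ℝ := fun t z =>
    φ (x + Real.sqrt t * σ * z) * ((Real.sqrt (2*π))⁻¹ * Real.exp (-z^2/2)) with hF1_def
  set F₂ : ℝ → ℝ → ℝ := fun t z => φ (Real.sqrt t * σ * z) *
    (q * sgn z * ((Real.sqrt (2*π))⁻¹ * Real.exp (-(|z| + |x| / (Real.sqrt t * σ))^2/2)))
    with hF2_def
  have heq : (fun t : ℝ => (∫ z, F₁ t z) + ∫ z, F₂ t z)
      =ᶠ[l] (fun t : ℝ => ∫ y : ℝ, φ y * skewDensity σ q t x y) := by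
    filter_upwards [self_mem_nhdsWithin] with t ht
    exact (key_cov σ hσ q hq' φ hφc hM x t ht).symm
  -- basic limits
  have hsc : Tendsto (fun t : ℝ => Real.sqrt t * σ) l (nhds 0) := by
    have h0 : Tendsto (fun t : ℝ => Real.sqrt t) l (nhds 0) := by
      have h00 : Tendsto (fun t : ℝ => Real.sqrt t) (nhds 0) (nhds 0) := by
        simpa using Real.continuous_sqrt.tendsto (0:ℝ)
      exact h00.mono_left nhdsWithin_le_nhds
    simpa using h0.mul_const σ
  have hbound_int : Integrable (fun z : ℝ => M * ((Real.sqrt (2*π))⁻¹ * Real.exp (-z^2/2))) :=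
    (((exp_sq_integrable (by norm_num : (0:ℝ) < 2)).const_mul _).const_mul M)
  have hconta : ∀ a : ℝ, Continuous fun z : ℝ => Real.exp (-(|z| + a)^2/2) := fun a =>
    Real.continuous_exp.comp ((((continuous_abs.add continuous_const).pow 2).neg).div_const _)
  -- main term
  have h1 : Tendsto (fun t : ℝ => ∫ z, F₁ t z) l (nhds (φ x)) := by
    have key := tendsto_integral_filter_of_dominated_convergence
      (μ := (volume : Measure ℝ)) (F := F₁)
      (f := fun z => φ x * ((Real.sqrt (2*π))⁻¹ * Real.exp (-z^2/2)))
      (l := l)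
      (bound := fun z => M * ((Real.sqrt (2*π))⁻¹ * Real.exp (-z^2/2)))
      (Filter.Eventually.of_forall fun t => by
        have : Continuous fun z : ℝ => F₁ t z := by
          refine Continuous.mul (hφc.comp ?_) ?_
          · exact continuous_const.add (continuous_const.mul continuous_id)
          · exact continuous_const.mul (Real.continuous_exp.comp
              (((continuous_pow 2).neg).div_const _))
        exact this.aestronglyMeasurable)
      (Filter.Eventually.of_forall fun t => (ae_of_all _ fun z => by
        simp only [hF1_def, Real.norm_eq_abs, abs_mul]
        rw [abs_of_pos hC, abs_of_pos (Real.exp_pos _)]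
        exact mul_le_mul_of_nonneg_right (hM _) (by positivity)))
      hbound_int
      (ae_of_all _ fun z => by
        have h0 : Tendsto (fun t : ℝ => x + Real.sqrt t * σ * z) l (nhds x) := by
          simpa using tendsto_const_nhds.add (hsc.mul_const z)
        exact ((hφc.tendsto x).comp h0).mul_const _)
    have hval : ∫ z : ℝ, φ x * ((Real.sqrt (2*π))⁻¹ * Real.exp (-z^2/2)) = φ x := by
      rw [integral_const_mul, integral_const_mul, gauss_int,
        inv_mul_cancel₀ (by positivity : Real.sqrt (2*π) ≠ 0), mul_one]
    rwa [hval] at key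
  -- correction term
  have h2 : Tendsto (fun t : ℝ => ∫ z, F₂ t z) l (nhds 0) := by
    have hmeas : ∀ t : ℝ, AEStronglyMeasurable (F₂ t) volume := fun t => by
      refine Measurable.aestronglyMeasurable ?_
      exact (hφc.comp (continuous_const.mul continuous_id)).measurable.mul
        (((measurable_const.mul measurable_sgn)).mul
          (continuous_const.mul (hconta (|x| / (Real.sqrt t * σ)))).measurable)
    have hbnd : ∀ t : ℝ, ∀ᵐ z : ℝ, ‖F₂ t z‖ ≤ M * ((Real.sqrt (2*π))⁻¹ * Real.exp (-z^2/2)) :=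
      fun t => ae_of_all _ fun z => by
        simp only [hF2_def, Real.norm_eq_abs]
        exact F2_bound hq' z _ (by positivity) (hM _)
    rcases eq_or_ne x 0 with hx | hx
    · subst hx
      have key := tendsto_integral_filter_of_dominated_convergence
        (μ := (volume : Measure ℝ)) (F := F₂)
        (f := fun z => φ 0 * (q * sgn z * ((Real.sqrt (2*π))⁻¹ * Real.exp (-(|z|)^2/2))))
        (l := l)
        (bound := fun z => M * ((Real.sqrt (2*π))⁻¹ * Real.exp (-z^2/2)))
        (Filter.Eventually.of_forall hmeas)
        (Filter.Eventually.of_forall hbnd)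
        hbound_int
        (ae_of_all _ fun z => by
          have h0 : Tendsto (fun t : ℝ => Real.sqrt t * σ * z) l (nhds 0) := by
            simpa using hsc.mul_const z
          have := ((hφc.tendsto 0).comp h0).mul_const
            (q * sgn z * ((Real.sqrt (2*π))⁻¹ * Real.exp (-(|z|)^2/2)))
          simp only [hF2_def, abs_zero, zero_div, add_zero]
          exact this)
      have hzero : ∫ z : ℝ,
          φ 0 * (q * sgn z * ((Real.sqrt (2*π))⁻¹ * Real.exp (-(|z|)^2/2))) = 0 := by
        set f : ℝ → ℝ := fun z =>
          φ 0 * (q * sgn z * ((Real.sqrt (2*π))⁻¹ * Real.exp (-(|z|)^2/2))) with hf_def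
        have hodd : ∀ z, f (-z) = - f z := fun z => by
          simp only [hf_def, abs_neg, sgn_neg']; ring
        have h1 : ∫ z : ℝ, f (-z) = ∫ z : ℝ, f z := integral_neg_eq_self f _
        have h2 : ∫ z : ℝ, f (-z) = - ∫ z : ℝ, f z := by
          rw [show (fun z : ℝ => f (-z)) = fun z => - f z from funext hodd, integral_neg]
        have := h1.symm.trans h2
        linarith
      rwa [hzero] at key
    · have key := tendsto_integral_filter_of_dominated_convergence
        (μ := (volume : Measure ℝ)) (F := F₂)
        (f := fun _ : ℝ => (0:ℝ))
        (l := l)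
        (bound := fun z => M * ((Real.sqrt (2*π))⁻¹ * Real.exp (-z^2/2)))
        (Filter.Eventually.of_forall hmeas)
        (Filter.Eventually.of_forall hbnd)
        hbound_int
        (ae_of_all _ fun z => by
          -- squeeze to zero
          have hgt : Tendsto (fun t : ℝ => |x| / (Real.sqrt t * σ)) l atTop := by
            have hin : Tendsto (fun t : ℝ => Real.sqrt t * σ) l (nhdsWithin 0 (Set.Ioi 0)) := by
              refine tendsto_nhdsWithin_of_tendsto_nhds_of_eventually_within _ hsc ?_
              filter_upwards [self_mem_nhdsWithin] with t ht
              exact mul_pos (Real.sqrt_pos.2 ht) hσ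
            have hinv : Tendsto (fun t : ℝ => (Real.sqrt t * σ)⁻¹) l atTop :=
              tendsto_inv_nhdsGT_zero.comp hin
            have := hinv.const_mul_atTop (abs_pos.2 hx)
            simpa [div_eq_mul_inv] using this
          have hsq : Tendsto (fun t : ℝ => (|x| / (Real.sqrt t * σ))^2) l atTop :=
            (tendsto_pow_atTop (by norm_num : 2 ≠ 0)).comp hgt
          have hbot : Tendsto (fun t : ℝ => -(|x| / (Real.sqrt t * σ))^2/2) l atBot := by
            have := hsq.atTop_mul_const_of_neg (show (-1/2 : ℝ) < 0 by norm_num)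
            refine this.congr fun t => by ring
          have hexp0 : Tendsto
              (fun t : ℝ => Real.exp (-(|x| / (Real.sqrt t * σ))^2/2)) l (nhds 0) :=
            Real.tendsto_exp_atBot.comp hbot
          have hg0 : Tendsto
              (fun t : ℝ => M * ((Real.sqrt (2*π))⁻¹ * Real.exp (-(|x| / (Real.sqrt t * σ))^2/2)))
              l (nhds 0) := by
            have := (hexp0.const_mul ((Real.sqrt (2*π))⁻¹)).const_mul M
            simpa using this
          refine squeeze_zero_norm (fun t => ?_) hg0
          simp only [hF2_def, Real.norm_eq_abs]
          exact F2_bound' hq' z _ (by positivity) (hM _))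
      rwa [integral_zero] at key
  have := (h1.add h2).congr' heq
  simpa using this
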